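/- Let f be a valid partition of K trees among P processes with extended first and last tree indices k_p, K_p ∈ ℤ and offset array O as defined. Then for every p < P: k_p = O[p] if O[p] ≥ 0 and k_p = −O[p] − 1 if O[p] < 0; moreover K_p = |O[p+1]| − 1. -/

import Mathlib

/-- `SharedWith f kk p` states that the first tree index `kk p` of process `p`
is shared with the next smaller nonempty process: there is `q < p` with
`f q` nonempty, all processes strictly between `q` and `p` empty, and
`kk p ∈ f q`. -/
def SharedWith {K P : ℕ} (f : Fin P → Finset (Fin K)) (kk : Fin P → ℤ)
    (p : Fin P) : Prop :=
  ∃ q : Fin P, q < p ∧ (f q).Nonempty ∧ (∀ r : Fin P, q < r → r < p → f r = ∅) ∧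
    ∃ k ∈ f q, ((k : ℕ) : ℤ) = kk p

/-- Recovering the extended first and last tree indices from the offset
array: `k_p = O[p]` if `O[p] ≥ 0`, `k_p = -O[p] - 1` if `O[p] < 0`, and
`K_p = |O[p+1]| - 1`. -/
theorem offset_array_recovers_partition (K P : ℕ) (hK : 1 ≤ K) (hP : 1 ≤ P)
    (f : Fin P → Finset (Fin K))
    (hcov : ∀ k : Fin K, ∃ p, k ∈ f p)
    (hi : ∀ p (h : (f p).Nonempty),
        f p = Finset.Icc ((f p).min' h) ((f p).max' h))
    (hii : ∀ p q (hp : (f p).Nonempty) (hq : (f q).Nonempty),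
        p < q → (f p).max' hp ≤ (f q).min' hq)
    (hiii : ∀ p q : Fin P, p ≠ q → ∀ k (hk : k ∈ f p), k ∈ f q →
        k = (f p).min' ⟨k, hk⟩ ∨ k = (f p).max' ⟨k, hk⟩)
    (kk KK : Fin P → ℤ)
    (hkk : ∀ p (h : (f p).Nonempty), kk p = (((f p).min' h : ℕ) : ℤ))
    (hKK : ∀ p (h : (f p).Nonempty), KK p = (((f p).max' h : ℕ) : ℤ))
    (hempty0 : ∀ p : Fin P, f p = ∅ → (∀ q : Fin P, q < p → f q = ∅) →
        kk p = 0 ∧ KK p = -1)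
    (hemptyq : ∀ p q : Fin P, f p = ∅ → q < p → (f q).Nonempty →
        (∀ r : Fin P, q < r → r < p → f r = ∅) → kk p = KK q + 1 ∧ KK p = KK q)
    (O : ℕ → ℤ)
    (hOP : O P = (K : ℤ))
    (hO1 : ∀ p : Fin P, (f p = ∅ ∨ ¬ SharedWith f kk p) → O (p : ℕ) = kk p)
    (hO2 : ∀ p : Fin P, f p ≠ ∅ → SharedWith f kk p → O (p : ℕ) = -(kk p) - 1) :
    ∀ p : Fin P,
      (0 ≤ O (p : ℕ) → kk p = O (p : ℕ)) ∧
      (O (p : ℕ) < 0 → kk p = -(O (p : ℕ)) - 1) ∧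
      KK p = |O ((p : ℕ) + 1)| - 1 := by
  classical
  -- anchor: either everything up to (and including) p is empty and KK p = -1,
  -- or there is a largest nonempty q ≤ p with KK p = KK q
  have anchor : ∀ p : Fin P,
      (KK p = -1 ∧ ∀ q : Fin P, q ≤ p → f q = ∅) ∨
      ∃ q : Fin P, q ≤ p ∧ (f q).Nonempty ∧
        (∀ r : Fin P, q < r → r ≤ p → f r = ∅) ∧ KK p = KK q := by
    intro p
    by_cases hp : (f p).Nonempty
    · exact Or.inr ⟨p, le_refl p, hp,
        fun r h1 h2 => absurd (lt_of_lt_of_le h1 h2) (lt_irrefl _), rfl⟩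
    · have hpe : f p = ∅ := Finset.not_nonempty_iff_eq_empty.mp hp
      by_cases h : ∃ q, q < p ∧ (f q).Nonempty
      · obtain ⟨q0, hq0, hq0ne⟩ := h
        set S := Finset.univ.filter (fun q : Fin P => q < p ∧ (f q).Nonempty)
          with hSdef
        have hS : S.Nonempty := ⟨q0, by simp [hSdef, hq0, hq0ne]⟩
        set q := S.max' hS with hqdef
        have hqmem : q ∈ S := S.max'_mem hS
        rw [hSdef, Finset.mem_filter] at hqmem
        have hbet : ∀ r : Fin P, q < r → r < p → f r = ∅ := by
          intro r h1 h2
          by_contra hre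
          have hrS : r ∈ S := by
            rw [hSdef, Finset.mem_filter]
            exact ⟨Finset.mem_univ _, h2, Finset.nonempty_iff_ne_empty.mpr hre⟩
          exact absurd (S.le_max' r hrS) (not_le.mpr h1)
        have hh := hemptyq p q hpe hqmem.2.1 hqmem.2.2 hbet
        refine Or.inr ⟨q, hqmem.2.1.le, hqmem.2.2, ?_, hh.2⟩
        intro r h1 h2
        rcases eq_or_lt_of_le h2 with h2 | h2
        · rw [h2]; exact hpe
        · exact hbet r h1 h2
      · push_neg at h
        have hall : ∀ q : Fin P, q < p → f q = ∅ := fun q hq =>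
          h q hq
        refine Or.inl ⟨(hempty0 p hpe hall).2, fun q hq => ?_⟩
        rcases eq_or_lt_of_le hq with h1 | h1
        · rw [h1]; exact hpe
        · exact hall q h1
  -- kk is nonnegative
  have hkk0 : ∀ p : Fin P, 0 ≤ kk p := by
    intro p
    by_cases hp : (f p).Nonempty
    · rw [hkk p hp]; positivity
    · have hpe := Finset.not_nonempty_iff_eq_empty.mp hp
      rcases anchor p with ⟨h1, h2⟩ | ⟨q, hqle, hqne, hbet, hKKeq⟩
      · rw [(hempty0 p hpe (fun q hq => h2 q hq.le)).1]
      · have hqlt : q < p := lt_of_le_of_ne hqle (by rintro rfl; exact hp hqne)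
        have hh := hemptyq p q hpe hqlt hqne (fun r h1 h2 => hbet r h1 h2.le)
        rw [hh.1, hKK q hqne]
        positivity
  -- if everything above p is empty then KK p = K - 1
  have htop : ∀ p : Fin P, (∀ r : Fin P, p < r → f r = ∅) → KK p = (K : ℤ) - 1 := by
    intro p htp
    obtain ⟨s, hs⟩ := hcov ⟨K - 1, by omega⟩
    rcases anchor p with ⟨h1, h2⟩ | ⟨q, hqle, hqne, hbet, hKKeq⟩
    · exfalso
      rcases le_or_gt s p with h | h
      · rw [h2 s h] at hs; exact absurd hs (Finset.notMem_empty _)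
      · rw [htp s h] at hs; exact absurd hs (Finset.notMem_empty _)
    · rw [hKKeq, hKK q hqne]
      have hub : ((f q).max' hqne : ℕ) ≤ K - 1 := by
        have := ((f q).max' hqne).isLt; omega
      have hlb : K - 1 ≤ ((f q).max' hqne : ℕ) := by
        have hsle : s ≤ q := by
          by_contra hc
          push_neg at hc
          rcases le_or_gt s p with h | h
          · rw [hbet s hc h] at hs; exact absurd hs (Finset.notMem_empty _)
          · rw [htp s h] at hs; exact absurd hs (Finset.notMem_empty _)
        rcases eq_or_lt_of_le hsle with h | h
        · subst h
          have h1 := (f s).le_max' _ hs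
          rw [Fin.le_def] at h1
          simp only [Fin.val_mk] at h1
          omega
        · have h1 := (f s).le_max' _ hs
          have h2 := hii s q ⟨_, hs⟩ hqne h
          have h3 := Finset.min'_le _ _ ((f q).max'_mem hqne)
          rw [Fin.le_def] at h1 h2 h3
          simp only [Fin.val_mk] at h1
          omega
      omega
  -- the key step: relation between |O p'| and KK p for p' = p + 1
  have hsucc : ∀ p p' : Fin P, (p' : ℕ) = (p : ℕ) + 1 →
      |O (p' : ℕ)| = KK p + 1 := by
    intro p p' hpp'
    have hplt : p < p' := by rw [Fin.lt_def]; omega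
    have hltp' : ∀ r : Fin P, r < p' ↔ r ≤ p := by
      intro r; rw [Fin.lt_def, Fin.le_def]; omega
    rcases anchor p with ⟨hKKm1, hall⟩ | ⟨q, hqle, hqne, hbet, hKKeq⟩
    · -- everything ≤ p is empty
      have hnsh : ¬ SharedWith f kk p' := by
        rintro ⟨q2, hq2, hq2ne, -, -⟩
        rw [hall q2 ((hltp' q2).mp hq2)] at hq2ne
        exact absurd hq2ne (by simp)
      have hO := hO1 p' (Or.inr hnsh)
      have hkkp' : kk p' = 0 := by
        by_cases hne : (f p').Nonempty
        · rw [hkk p' hne]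
          obtain ⟨s, hs⟩ := hcov ⟨0, by omega⟩
          have hmin0 : ((f p').min' hne : ℕ) = 0 := by
            rcases lt_trichotomy s p' with h | h | h
            · rw [hall s ((hltp' s).mp h)] at hs
              exact absurd hs (Finset.notMem_empty _)
            · subst h
              have h1 := (f s).min'_le _ hs
              rw [Fin.le_def] at h1
              simp only [Fin.val_mk] at h1
              omega
            · have h1 := (f s).min'_le _ hs
              have h2 := hii p' s hne ⟨_, hs⟩ h
              have h3 := Finset.min'_le _ _ ((f p').max'_mem hne)
              rw [Fin.le_def] at h1 h2 h3
              simp only [Fin.val_mk] at h1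
              omega
          rw [hmin0]; simp
        · exact (hempty0 p' (Finset.not_nonempty_iff_eq_empty.mp hne)
            (fun r hr => hall r ((hltp' r).mp hr))).1
      rw [hO, hkkp', hKKm1]; simp
    · have hqltp' : q < p' := (hltp' q).mpr hqle
      have hKKq0 : 0 ≤ KK q := by rw [hKK q hqne]; positivity
      have hbet' : ∀ r : Fin P, q < r → r < p' → f r = ∅ := fun r h1 h2 =>
        hbet r h1 ((hltp' r).mp h2)
      have huniq : ∀ q2 : Fin P, q2 < p' → (f q2).Nonempty →
          (∀ r : Fin P, q2 < r → r < p' → f r = ∅) → q2 = q := by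
        intro q2 h1 h2 h3
        rcases lt_trichotomy q2 q with h | h | h
        · exfalso; rw [h3 q h hqltp'] at hqne; exact absurd hqne (by simp)
        · exact h
        · exfalso; rw [hbet' q2 h h1] at h2; exact absurd h2 (by simp)
      by_cases hne : (f p').Nonempty
      · have hmaxmin := hii q p' hqne hne hqltp'
        rw [Fin.le_def] at hmaxmin
        by_cases hsh : SharedWith f kk p'
        · -- shared: kk p' = KK q
          have hOv := hO2 p' (Finset.nonempty_iff_ne_empty.mp hne) hsh
          obtain ⟨q2, h1, h2, h3, k, hkmem, hkval⟩ := hsh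
          have hq2eq : q2 = q := huniq q2 h1 h2 h3
          subst hq2eq
          have hkk' := hkk p' hne
          have hkeq : (k : ℕ) = ((f p').min' hne : ℕ) := by
            have hcast : ((k : ℕ) : ℤ) = (((f p').min' hne : ℕ) : ℤ) := by
              rw [hkval, hkk']
            exact_mod_cast hcast
          have hle1 : ((f p').min' hne : ℕ) ≤ ((f q2).max' h2 : ℕ) := by
            have h4 := (f q2).le_max' k hkmem
            rw [Fin.le_def] at h4
            omega
          have hkkv : kk p' = KK q2 := by
            rw [hkk', hKK q2 h2]
            omega
          rw [hOv, hkkv, hKKeq]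
          rw [abs_of_neg (by linarith)]
          ring
        · -- not shared: kk p' = KK q + 1
          have hOv := hO1 p' (Or.inr hsh)
          have hlt : ((f q).max' hqne : ℕ) < ((f p').min' hne : ℕ) := by
            rcases eq_or_lt_of_le hmaxmin with h5 | h5
            · exfalso
              exact hsh ⟨q, hqltp', hqne, hbet', (f q).max' hqne,
                (f q).max'_mem hqne, by rw [hkk p' hne]; exact_mod_cast h5⟩
            · exact h5
          have heq : ((f q).max' hqne : ℕ) + 1 = ((f p').min' hne : ℕ) := by
            by_contra hc
            have hc' : ((f q).max' hqne : ℕ) + 1 < ((f p').min' hne : ℕ) := by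
              omega
            obtain ⟨s, hs⟩ := hcov ⟨((f q).max' hqne : ℕ) + 1, by
              have := ((f p').min' hne).isLt; omega⟩
            rcases lt_trichotomy s q with h | h | h
            · have h1 := (f s).le_max' _ hs
              have h2 := hii s q ⟨_, hs⟩ hqne h
              have h3 := Finset.min'_le _ _ ((f q).max'_mem hqne)
              rw [Fin.le_def] at h1 h2 h3
              simp only [Fin.val_mk] at h1
              omega
            · subst h
              have h1 := (f s).le_max' _ hs
              rw [Fin.le_def] at h1
              simp only [Fin.val_mk] at h1
              omega
            · rcases lt_trichotomy s p' with h' | h' | h'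
              · rw [hbet' s h h'] at hs
                exact absurd hs (Finset.notMem_empty _)
              · subst h'
                have h1 := (f s).min'_le _ hs
                rw [Fin.le_def] at h1
                simp only [Fin.val_mk] at h1
                omega
              · have h1 := (f s).min'_le _ hs
                have h2 := hii p' s hne ⟨_, hs⟩ h'
                have h3 := Finset.min'_le _ _ ((f p').max'_mem hne)
                rw [Fin.le_def] at h1 h2 h3
                simp only [Fin.val_mk] at h1
                omega
          have hkkv : kk p' = KK q + 1 := by
            rw [hkk p' hne, hKK q hqne]
            omega
          rw [hOv, hkkv, hKKeq]
          rw [abs_of_nonneg (by linarith)]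
      · -- f p' empty
        have hpe := Finset.not_nonempty_iff_eq_empty.mp hne
        have hOv := hO1 p' (Or.inl hpe)
        have hkkv := (hemptyq p' q hpe hqltp' hqne hbet').1
        rw [hOv, hkkv, hKKeq, abs_of_nonneg (by linarith)]
  -- assemble
  intro p
  have hdis : O (p : ℕ) = kk p ∨ O (p : ℕ) = -(kk p) - 1 := by
    by_cases h1 : f p = ∅ ∨ ¬ SharedWith f kk p
    · exact Or.inl (hO1 p h1)
    · push_neg at h1
      exact Or.inr (hO2 p (Finset.nonempty_iff_ne_empty.mp h1.1) h1.2)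
  have hkknn := hkk0 p
  refine ⟨?_, ?_, ?_⟩
  · intro h0
    rcases hdis with h | h
    · exact h.symm
    · exfalso; linarith
  · intro h0
    rcases hdis with h | h
    · exfalso; linarith
    · linarith
  · by_cases hlast : (p : ℕ) + 1 = P
    · rw [hlast, hOP, abs_of_nonneg (by positivity)]
      refine htop p fun r hr => ?_
      exfalso
      have := r.isLt
      rw [Fin.lt_def] at hr
      omega
    · have hltP : (p : ℕ) + 1 < P := by have := p.isLt; omega
      have hres := hsucc p ⟨(p : ℕ) + 1, hltP⟩ rfl
      simp only [Fin.val_mk] at hres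
      linarith
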